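/- Trace estimate at x = 1: if u ∈ L²(0,1) is locally absolutely continuous on (0,1] with √a·u' ∈ L²(0,1), where a satisfies the degeneracy assumptions with μ < 2, then u(1)² ≤ max{2, 1/a(1)} · (‖u‖²_{L²} + ∫₀¹ a|u'|² dx). -/

import Mathlib

open MeasureTheory Set

-- Auxiliary lemma: a(1) * x^2 ≤ a(x) on (0,1]
lemma aux_pow_bound (a ad : ℝ → ℝ) (μ : ℝ)
    (hcont : ContinuousOn a (Set.Icc 0 1))
    (hderiv : ∀ x ∈ Set.Ioc (0:ℝ) 1, HasDerivAt a (ad x) x)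
    (hpos : ∀ x ∈ Set.Ioc (0:ℝ) 1, 0 < a x)
    (hμ2 : μ < 2)
    (hμ : ∀ x ∈ Set.Ioc (0:ℝ) 1, x * |ad x| ≤ μ * a x) :
    ∀ x ∈ Set.Ioc (0:ℝ) 1, a 1 * x ^ 2 ≤ a x := by
  intro x hx
  have hx0 : (0:ℝ) < x := hx.1
  set f : ℝ → ℝ := fun t => a t * t ^ (-μ) with hf
  have hA : AntitoneOn f (Icc x 1) := by
    apply antitoneOn_of_deriv_nonpos (convex_Icc x 1)
    · apply ContinuousOn.mul (hcont.mono (Icc_subset_Icc hx0.le le_rfl))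
      intro t ht
      exact (Real.continuousAt_rpow_const t (-μ)
        (Or.inl (lt_of_lt_of_le hx0 ht.1).ne')).continuousWithinAt
    · rw [interior_Icc]
      intro t ht
      have ht0 : (0:ℝ) < t := lt_trans hx0 ht.1
      exact (((hderiv t ⟨ht0, ht.2.le⟩).mul
        (Real.hasDerivAt_rpow_const (Or.inl ht0.ne'))).differentiableAt).differentiableWithinAt
    · rw [interior_Icc]
      intro t ht
      have ht0 : (0:ℝ) < t := lt_trans hx0 ht.1
      have hd : HasDerivAt f (ad t * t ^ (-μ) + a t * (-μ * t ^ (-μ - 1))) t :=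
        (hderiv t ⟨ht0, ht.2.le⟩).mul (Real.hasDerivAt_rpow_const (Or.inl ht0.ne'))
      rw [hd.deriv]
      have hre : t ^ (-μ) = t ^ (-μ - 1) * t := by
        rw [← Real.rpow_add_one ht0.ne' (-μ - 1), show -μ - 1 + 1 = -μ by ring]
      have htm : (0:ℝ) < t ^ (-μ - 1) := Real.rpow_pos_of_pos ht0 _
      have h1 : t * ad t ≤ μ * a t := by
        have := mul_le_mul_of_nonneg_left (le_abs_self (ad t)) ht0.le
        linarith [hμ t ⟨ht0, ht.2.le⟩]
      have heq : ad t * t ^ (-μ) + a t * (-μ * t ^ (-μ - 1))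
          = t ^ (-μ - 1) * (t * ad t - μ * a t) := by rw [hre]; ring
      rw [heq]
      exact mul_nonpos_of_nonneg_of_nonpos htm.le (by linarith)
  have hf1 : f 1 = a 1 := by simp [hf]
  have hle : a 1 ≤ a x * x ^ (-μ) := by
    have := hA ⟨le_rfl, hx.2⟩ ⟨hx.2, le_rfl⟩ hx.2
    rwa [hf1] at this
  have hxμ : (0:ℝ) < x ^ μ := Real.rpow_pos_of_pos hx0 _
  have h2 : a 1 * x ^ μ ≤ a x := by
    have := mul_le_mul_of_nonneg_right hle hxμ.le
    rwa [mul_assoc, ← Real.rpow_add hx0, neg_add_cancel, Real.rpow_zero, mul_one] at this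
  have h3 : x ^ (2:ℝ) ≤ x ^ μ := Real.rpow_le_rpow_of_exponent_ge hx0 hx.2 hμ2.le
  have h4 : x ^ (2:ℝ) = x ^ 2 := by
    rw [show (2:ℝ) = ((2:ℕ):ℝ) by norm_num, Real.rpow_natCast]
  have ha1 : 0 ≤ a 1 := (hpos 1 ⟨one_pos, le_rfl⟩).le
  calc a 1 * x ^ 2 = a 1 * x ^ (2:ℝ) := by rw [h4]
    _ ≤ a 1 * x ^ μ := mul_le_mul_of_nonneg_left h3 ha1
    _ ≤ a x := h2

lemma aux_small_point (u : ℝ → ℝ)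
    (hu2 : MeasureTheory.IntegrableOn (fun x => (u x) ^ 2) (Set.Ioo 0 1))
    (δ : ℝ) (hδ0 : 0 < δ) (hδ1 : δ ≤ 1) (ε : ℝ) (hε : 0 < ε) :
    ∃ x ∈ Set.Ioo (0:ℝ) δ, x * u x ^ 2 < ε := by
  by_contra h
  push_neg at h
  have hint : IntegrableOn (fun x : ℝ => x ^ (-1 : ℝ)) (Ioo 0 δ) := by
    apply Integrable.mono' (((hu2.mono_set (Ioo_subset_Ioo le_rfl hδ1)).const_mul ε⁻¹))
    · exact ((measurable_id.pow_const _).aestronglyMeasurable :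
        AEStronglyMeasurable (fun x : ℝ => x ^ (-1:ℝ)) _)
    · rw [ae_restrict_iff' measurableSet_Ioo]
      filter_upwards with x
      intro hx
      have hx0 : (0:ℝ) < x := hx.1
      have h2 := h x hx
      rw [Real.rpow_neg_one, Real.norm_eq_abs, abs_of_nonneg (inv_nonneg.2 hx0.le)]
      rw [inv_le_iff_one_le_mul₀ hx0]
      have hεi : ε * ε⁻¹ = 1 := mul_inv_cancel₀ hε.ne'
      nlinarith [mul_le_mul_of_nonneg_left h2 (inv_nonneg.2 hε.le)]
  rw [intervalIntegral.integrableOn_Ioo_rpow_iff hδ0] at hint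
  linarith

theorem trace_estimate_at_one
    (a ad : ℝ → ℝ) (μ : ℝ)
    (hcont : ContinuousOn a (Set.Icc 0 1))
    (hderiv : ∀ x ∈ Set.Ioc (0:ℝ) 1, HasDerivAt a (ad x) x)
    (hpos : ∀ x ∈ Set.Ioc (0:ℝ) 1, 0 < a x)
    (ha0 : a 0 = 0)
    (hμ0 : 0 ≤ μ) (hμ2 : μ < 2)
    (hμ : ∀ x ∈ Set.Ioc (0:ℝ) 1, x * |ad x| ≤ μ * a x)
    (u ud : ℝ → ℝ)
    (hu2 : MeasureTheory.IntegrableOn (fun x => (u x) ^ 2) (Set.Ioo 0 1))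
    (huderiv : ∀ x ∈ Set.Ioc (0:ℝ) 1, HasDerivAt u (ud x) x)
    (hud2 : MeasureTheory.IntegrableOn (fun x => a x * (ud x) ^ 2) (Set.Ioo 0 1)) :
    (u 1) ^ 2 ≤ max 2 (1 / a 1) *
      ((∫ x in Set.Ioo (0:ℝ) 1, (u x) ^ 2) + ∫ x in Set.Ioo (0:ℝ) 1, a x * (ud x) ^ 2) := by
  have ha1 : 0 < a 1 := hpos 1 ⟨one_pos, le_rfl⟩
  have hkey := aux_pow_bound a ad μ hcont hderiv hpos hμ2 hμ
  set h : ℝ → ℝ := fun x => 2 * u x ^ 2 + (1 / a 1) * (a x * ud x ^ 2) with hh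
  set g : ℝ → ℝ := fun x => u x ^ 2 + 2 * x * u x * ud x with hg
  have hInt : IntegrableOn h (Ioo 0 1) := (hu2.const_mul 2).add (hud2.const_mul (1 / a 1))
  -- pointwise bound
  have habs : ∀ x ∈ Ioc (0:ℝ) 1, |g x| ≤ h x := by
    intro x hx
    have hax := hkey x hx
    have hx0 : (0:ℝ) < x := hx.1
    have hb1 : |2 * x * u x * ud x| ≤ u x ^ 2 + x ^ 2 * ud x ^ 2 := by
      have h0 : |2 * x * u x * ud x| = 2 * x * |u x| * |ud x| := by
        rw [abs_mul, abs_mul, abs_mul, abs_of_nonneg hx0.le]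
        norm_num
      rw [h0]
      nlinarith [sq_nonneg (|u x| - x * |ud x|), sq_abs (u x), sq_abs (ud x),
        abs_nonneg (u x), abs_nonneg (ud x), hx0]
    have hb2 : x ^ 2 * ud x ^ 2 ≤ (1 / a 1) * (a x * ud x ^ 2) := by
      rw [show (1 / a 1) * (a x * ud x ^ 2) = (a x * ud x ^ 2) / a 1 by ring,
        le_div_iff₀ ha1]
      nlinarith [mul_le_mul_of_nonneg_right hax (sq_nonneg (ud x))]
    calc |g x| ≤ |u x ^ 2| + |2 * x * u x * ud x| := abs_add_le _ _
      _ = u x ^ 2 + |2 * x * u x * ud x| := by rw [abs_of_nonneg (sq_nonneg _)]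
      _ ≤ h x := by simp only [hh]; linarith
  -- measurability
  have hucont : ContinuousOn u (Ioo 0 1) := fun x hx =>
    ((huderiv x ⟨hx.1, hx.2.le⟩).continuousAt).continuousWithinAt
  have humeas : AEStronglyMeasurable u (volume.restrict (Ioo 0 1)) :=
    hucont.aestronglyMeasurable measurableSet_Ioo
  have hudmeas : AEStronglyMeasurable ud (volume.restrict (Ioo 0 1)) := by
    apply (measurable_deriv u).aestronglyMeasurable.congr
    exact (ae_restrict_iff' measurableSet_Ioo).2
      (ae_of_all _ fun x hx => (huderiv x ⟨hx.1, hx.2.le⟩).deriv)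
  have hgmeas : AEStronglyMeasurable g (volume.restrict (Ioo 0 1)) := by
    have h1 : AEStronglyMeasurable (fun x => u x ^ 2) (volume.restrict (Ioo 0 1)) := by
      exact (humeas.mul humeas).congr (ae_of_all _ fun x => (sq (u x)).symm)
    have h2 : AEStronglyMeasurable (fun x => 2 * x * u x * ud x)
        (volume.restrict (Ioo 0 1)) :=
      ((aestronglyMeasurable_id.const_mul 2).mul humeas).mul hudmeas
    exact h1.add h2
  have gInt : IntegrableOn g (Ioo 0 1) := by
    apply hInt.mono' hgmeas
    rw [ae_restrict_iff' measurableSet_Ioo]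
    exact ae_of_all _ fun x hx => by
      rw [Real.norm_eq_abs]; exact habs x ⟨hx.1, hx.2.le⟩
  have gIntIoc : IntegrableOn g (Ioc 0 1) := (integrableOn_Ioc_iff_integrableOn_Ioo).2 gInt
  have hIntIoc : IntegrableOn h (Ioc 0 1) := (integrableOn_Ioc_iff_integrableOn_Ioo).2 hInt
  have hnn : ∀ x ∈ Ioc (0:ℝ) 1, 0 ≤ h x := fun x hx =>
    add_nonneg (by positivity)
      (mul_nonneg (by positivity) (mul_nonneg (hpos x hx).le (sq_nonneg _)))
  -- small points
  have hch : ∀ n : ℕ, ∃ x ∈ Ioo (0:ℝ) (min 1 (1 / ((n:ℝ) + 1))),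
      x * u x ^ 2 < 1 / ((n:ℝ) + 1) := fun n =>
    aux_small_point u hu2 _ (lt_min one_pos (by positivity)) (min_le_left _ _) _ (by positivity)
  choose χ hχmem hχlt using hch
  have hχ0 : ∀ n, 0 < χ n := fun n => (hχmem n).1
  have hχ1 : ∀ n, χ n < 1 := fun n => lt_of_lt_of_le (hχmem n).2 (min_le_left _ _)
  -- key inequality for each n
  have hkey2 : ∀ n, u 1 ^ 2 ≤ χ n * u (χ n) ^ 2 + ∫ x in Ioo (0:ℝ) 1, h x := by
    intro n
    have hc0 := hχ0 n
    have hc1 := hχ1 n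
    have hd1 : ∀ x ∈ uIcc (χ n) 1, HasDerivAt (fun t => t * u t ^ 2) (g x) x := by
      intro x hx
      rw [uIcc_of_le hc1.le] at hx
      have hx' : x ∈ Ioc (0:ℝ) 1 := ⟨lt_of_lt_of_le hc0 hx.1, hx.2⟩
      have hd := (hasDerivAt_id x).mul ((huderiv x hx').pow 2)
      exact hd.congr_deriv (by simp [hg]; ring)
    have hd2 : IntervalIntegrable g volume (χ n) 1 := by
      rw [intervalIntegrable_iff_integrableOn_Ioc_of_le hc1.le]
      exact gIntIoc.mono_set (Ioc_subset_Ioc hc0.le le_rfl)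
    have hftc0 := intervalIntegral.integral_eq_sub_of_hasDerivAt hd1 hd2
    have hftc : ∫ x in (χ n)..1, g x = u 1 ^ 2 - χ n * u (χ n) ^ 2 := by
      rw [hftc0]; norm_num
    have h6 : ∫ x in (χ n)..1, g x ≤ ∫ x in Ioo (0:ℝ) 1, h x := by
      rw [intervalIntegral.integral_of_le hc1.le]
      calc ∫ x in Ioc (χ n) 1, g x ≤ ∫ x in Ioc (χ n) 1, h x := by
            apply setIntegral_mono_on (gIntIoc.mono_set (Ioc_subset_Ioc hc0.le le_rfl))
              (hIntIoc.mono_set (Ioc_subset_Ioc hc0.le le_rfl)) measurableSet_Ioc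
            intro x hx
            exact le_trans (le_abs_self _) (habs x ⟨lt_trans hc0 hx.1, hx.2⟩)
        _ ≤ ∫ x in Ioc (0:ℝ) 1, h x := by
            apply setIntegral_mono_set hIntIoc
            · exact (ae_restrict_iff' measurableSet_Ioc).2 (ae_of_all _ hnn)
            · exact (Ioc_subset_Ioc hc0.le le_rfl).eventuallyLE
        _ = ∫ x in Ioo (0:ℝ) 1, h x := integral_Ioc_eq_integral_Ioo
    nlinarith [hftc, h6]
  -- take the limit
  have hten : Filter.Tendsto (fun n => χ n * u (χ n) ^ 2) Filter.atTop (nhds 0) := by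
    apply squeeze_zero (fun n => mul_nonneg (hχ0 n).le (sq_nonneg _))
      (fun n => (hχlt n).le)
    exact tendsto_one_div_add_atTop_nhds_zero_nat
  have hlim : u 1 ^ 2 ≤ (0:ℝ) + ∫ x in Ioo (0:ℝ) 1, h x :=
    ge_of_tendsto' (hten.add_const _) hkey2
  have hB : ∫ x in Ioo (0:ℝ) 1, h x
      = 2 * (∫ x in Ioo (0:ℝ) 1, u x ^ 2) + (1 / a 1) * ∫ x in Ioo (0:ℝ) 1, a x * ud x ^ 2 := by
    rw [hh, integral_add (hu2.const_mul 2) (hud2.const_mul (1 / a 1)),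
      integral_const_mul, integral_const_mul]
  -- conclude
  have hI1 : 0 ≤ ∫ x in Ioo (0:ℝ) 1, u x ^ 2 :=
    setIntegral_nonneg measurableSet_Ioo fun x _ => sq_nonneg _
  have hI2 : 0 ≤ ∫ x in Ioo (0:ℝ) 1, a x * ud x ^ 2 :=
    setIntegral_nonneg measurableSet_Ioo fun x hx =>
      mul_nonneg (hpos x ⟨hx.1, hx.2.le⟩).le (sq_nonneg _)
  have hM1 : (2:ℝ) ≤ max 2 (1 / a 1) := le_max_left _ _
  have hM2 : 1 / a 1 ≤ max 2 (1 / a 1) := le_max_right _ _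
  nlinarith [mul_le_mul_of_nonneg_right hM1 hI1, mul_le_mul_of_nonneg_right hM2 hI2,
    hlim, hB]
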